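/- Let G be a connected (theta, triangle, wheel)-free graph with no clique cutset. Then G has no star cutset: there is no vertex v and set C with v in C, C contained in the closed neighborhood N[v], such that G minus C is disconnected. -/

import Mathlib

open SimpleGraph Set

namespace Paper

variable {V : Type} {W : Type}

/-- X and Y are anticomplete: no edge between them. -/
def Anticomplete (G : SimpleGraph V) (X Y : Set V) : Prop :=
  ∀ x ∈ X, ∀ y ∈ Y, ¬ G.Adj x y

/-- Closed neighborhood N[v]. -/
def closedNbr (G : SimpleGraph V) (v : V) : Set V := insert v (G.neighborSet v)

/-- Open neighborhood N(X) of a set of vertices. -/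
def setNbr (G : SimpleGraph V) (X : Set V) : Set V :=
  {v | v ∉ X ∧ ∃ x ∈ X, G.Adj x v}

/-- Closed neighborhood N[X] of a set of vertices. -/
def closedNbrSet (G : SimpleGraph V) (X : Set V) : Set V := X ∪ setNbr G X

/-- D is a connected component of the subgraph of G induced on S. -/
def IsComponentOf (G : SimpleGraph V) (S D : Set V) : Prop :=
  D.Nonempty ∧ D ⊆ S ∧ (G.induce D).Connected ∧
    ∀ D' : Set V, D ⊆ D' → D' ⊆ S → (G.induce D').Connected → D' = D

/-- G contains no induced copy of H. -/
def HFree (G : SimpleGraph V) (H : SimpleGraph W) : Prop :=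
  ∀ s : Set V, ¬ Nonempty ((G.induce s) ≃g H)

/-- The diamond: K₄ minus the edge 01. -/
def diamond : SimpleGraph (Fin 4) :=
  SimpleGraph.fromRel (fun x y => s(x, y) ≠ s(0, 1))

/-- H is a hole of G: an induced cycle of length at least 4. -/
def IsHole (G : SimpleGraph V) (H : Set V) : Prop :=
  ∃ n, 4 ≤ n ∧ Nonempty ((G.induce H) ≃g cycleGraph n)

/-- H is an even hole of G. -/
def IsEvenHole (G : SimpleGraph V) (H : Set V) : Prop :=
  ∃ n, 4 ≤ n ∧ Even n ∧ Nonempty ((G.induce H) ≃g cycleGraph n)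

/-- (H, w) is a wheel: a hole plus a vertex with ≥ 3 pairwise non-adjacent neighbors in H. -/
def IsWheel (G : SimpleGraph V) (H : Set V) (w : V) : Prop :=
  IsHole G H ∧ ∃ x y z, x ∈ H ∩ G.neighborSet w ∧ y ∈ H ∩ G.neighborSet w ∧
    z ∈ H ∩ G.neighborSet w ∧ x ≠ y ∧ x ≠ z ∧ y ≠ z ∧
    ¬ G.Adj x y ∧ ¬ G.Adj x z ∧ ¬ G.Adj y z

/-- (H, v) is a line wheel: N(v) ∩ H is a union of two disjoint edges. -/
def IsLineWheel (G : SimpleGraph V) (H : Set V) (v : V) : Prop :=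
  IsHole G H ∧ v ∉ H ∧ ∃ a b c d : V,
    a ≠ b ∧ a ≠ c ∧ a ≠ d ∧ b ≠ c ∧ b ≠ d ∧ c ≠ d ∧
    G.neighborSet v ∩ H = {a, b, c, d} ∧
    G.Adj a b ∧ G.Adj c d ∧ ¬ G.Adj a c ∧ ¬ G.Adj a d ∧ ¬ G.Adj b c ∧ ¬ G.Adj b d

/-- An even wheel: a line wheel, or a wheel with an even number of neighbors in the hole,
not forming a path of length one. -/
def IsEvenWheel (G : SimpleGraph V) (H : Set V) (v : V) : Prop :=
  IsLineWheel G H v ∨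
    (IsWheel G H v ∧ Even ((G.neighborSet v ∩ H).ncard) ∧
      ¬ ∃ a b, a ≠ b ∧ G.Adj a b ∧ G.neighborSet v ∩ H = {a, b})

/-- The set of vertices of a walk. -/
def suppSet (G : SimpleGraph V) {a b : V} (p : G.Walk a b) : Set V :=
  {v | v ∈ p.support}

/-- A walk is induced: the only adjacencies among its vertices are its own edges. -/
def InducedWalk (G : SimpleGraph V) {a b : V} (p : G.Walk a b) : Prop :=
  ∀ u v, u ∈ p.support → v ∈ p.support → G.Adj u v → s(u, v) ∈ p.edges

/-- The interior of a walk: its vertices except the two endpoints. -/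
def wInterior (G : SimpleGraph V) {a b : V} (p : G.Walk a b) : Set V :=
  {v | v ∈ p.support ∧ v ≠ a ∧ v ≠ b}

/-- G contains a theta as an induced subgraph. -/
def ContainsTheta (G : SimpleGraph V) : Prop :=
  ∃ (a b : V) (p₁ p₂ p₃ : G.Walk a b),
    ¬ G.Adj a b ∧
    p₁.IsPath ∧ p₂.IsPath ∧ p₃.IsPath ∧
    InducedWalk G p₁ ∧ InducedWalk G p₂ ∧ InducedWalk G p₃ ∧
    2 ≤ p₁.length ∧ 2 ≤ p₂.length ∧ 2 ≤ p₃.length ∧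
    Disjoint (wInterior G p₁) (wInterior G p₂) ∧
    Disjoint (wInterior G p₁) (wInterior G p₃) ∧
    Disjoint (wInterior G p₂) (wInterior G p₃) ∧
    Anticomplete G (wInterior G p₁) (wInterior G p₂) ∧
    Anticomplete G (wInterior G p₁) (wInterior G p₃) ∧
    Anticomplete G (wInterior G p₂) (wInterior G p₃)

/-- G contains a pyramid as an induced subgraph. -/
def ContainsPyramid (G : SimpleGraph V) : Prop :=
  ∃ (a b₁ b₂ b₃ : V) (p₁ : G.Walk a b₁) (p₂ : G.Walk a b₂) (p₃ : G.Walk a b₃),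
    G.Adj b₁ b₂ ∧ G.Adj b₁ b₃ ∧ G.Adj b₂ b₃ ∧
    p₁.IsPath ∧ p₂.IsPath ∧ p₃.IsPath ∧
    InducedWalk G p₁ ∧ InducedWalk G p₂ ∧ InducedWalk G p₃ ∧
    1 ≤ p₁.length ∧ 1 ≤ p₂.length ∧ 1 ≤ p₃.length ∧
    ((2 ≤ p₁.length ∧ 2 ≤ p₂.length) ∨ (2 ≤ p₁.length ∧ 2 ≤ p₃.length) ∨
      (2 ≤ p₂.length ∧ 2 ≤ p₃.length)) ∧
    Disjoint (suppSet G p₁ \ {a}) (suppSet G p₂ \ {a}) ∧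
    Disjoint (suppSet G p₁ \ {a}) (suppSet G p₃ \ {a}) ∧
    Disjoint (suppSet G p₂ \ {a}) (suppSet G p₃ \ {a}) ∧
    (∀ u v, u ∈ suppSet G p₁ \ {a} → v ∈ suppSet G p₂ \ {a} → G.Adj u v →
      u = b₁ ∧ v = b₂) ∧
    (∀ u v, u ∈ suppSet G p₁ \ {a} → v ∈ suppSet G p₃ \ {a} → G.Adj u v →
      u = b₁ ∧ v = b₃) ∧
    (∀ u v, u ∈ suppSet G p₂ \ {a} → v ∈ suppSet G p₃ \ {a} → G.Adj u v →
      u = b₂ ∧ v = b₃)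

/-- G contains a prism as an induced subgraph. -/
def ContainsPrism (G : SimpleGraph V) : Prop :=
  ∃ (a₁ a₂ a₃ b₁ b₂ b₃ : V) (p₁ : G.Walk a₁ b₁) (p₂ : G.Walk a₂ b₂) (p₃ : G.Walk a₃ b₃),
    G.Adj a₁ a₂ ∧ G.Adj a₁ a₃ ∧ G.Adj a₂ a₃ ∧
    G.Adj b₁ b₂ ∧ G.Adj b₁ b₃ ∧ G.Adj b₂ b₃ ∧
    p₁.IsPath ∧ p₂.IsPath ∧ p₃.IsPath ∧
    InducedWalk G p₁ ∧ InducedWalk G p₂ ∧ InducedWalk G p₃ ∧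
    Disjoint (suppSet G p₁) (suppSet G p₂) ∧
    Disjoint (suppSet G p₁) (suppSet G p₃) ∧
    Disjoint (suppSet G p₂) (suppSet G p₃) ∧
    (∀ u v, u ∈ suppSet G p₁ → v ∈ suppSet G p₂ → G.Adj u v →
      s(u, v) = s(a₁, a₂) ∨ s(u, v) = s(b₁, b₂)) ∧
    (∀ u v, u ∈ suppSet G p₁ → v ∈ suppSet G p₃ → G.Adj u v →
      s(u, v) = s(a₁, a₃) ∨ s(u, v) = s(b₁, b₃)) ∧
    (∀ u v, u ∈ suppSet G p₂ → v ∈ suppSet G p₃ → G.Adj u v →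
      s(u, v) = s(a₂, a₃) ∨ s(u, v) = s(b₂, b₃))

/-- G has a clique cutset. -/
def HasCliqueCutset (G : SimpleGraph V) : Prop :=
  ∃ C : Set V, G.IsClique C ∧ ¬ (G.induce Cᶜ).Preconnected

/-- (A, C, B) is a separation of G. -/
def IsSeparation (G : SimpleGraph V) (A C B : Set V) : Prop :=
  A ∪ C ∪ B = Set.univ ∧ Disjoint A C ∧ Disjoint A B ∧ Disjoint C B ∧
    Anticomplete G A B

/-- The weight of a set of vertices. -/
noncomputable def fweight (w : V → ℝ) (X : Set V) : ℝ := ∑ᶠ x ∈ X, w x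

/-- X is a (w, c)-balanced separator of G. -/
def IsBalSep (G : SimpleGraph V) (w : V → ℝ) (c : ℝ) (X : Set V) : Prop :=
  ∀ D, IsComponentOf G Xᶜ D → fweight w D ≤ c

/-- The treewidth of G is at most k. -/
def TreewidthLE (G : SimpleGraph V) (k : ℕ) : Prop :=
  ∃ (T : Type) (tG : SimpleGraph T) (χ : T → Set V),
    tG.IsTree ∧
    (∀ v, ∃ t, v ∈ χ t) ∧
    (∀ u v, G.Adj u v → ∃ t, u ∈ χ t ∧ v ∈ χ t) ∧
    (∀ v, (tG.induce {t | v ∈ χ t}).Connected) ∧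
    ∀ t, (χ t).ncard ≤ k + 1

/-- The Ramsey number R(t, s). -/
noncomputable def ramsey (t s : ℕ) : ℕ :=
  sInf {n | ∀ G : SimpleGraph (Fin n), ¬ G.CliqueFree t ∨ ¬ Gᶜ.CliqueFree s}

/-- (H, v) is a twin wheel: N(v) ∩ H is a path of length two. -/
def IsTwinWheel (G : SimpleGraph V) (H : Set V) (v : V) : Prop :=
  IsHole G H ∧ ∃ a b c : V, a ≠ b ∧ a ≠ c ∧ b ≠ c ∧
    G.neighborSet v ∩ H = {a, b, c} ∧ G.Adj a b ∧ G.Adj b c ∧ ¬ G.Adj a c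

/-- (H, v) is a short pyramid: v has exactly three neighbors in H, exactly two adjacent. -/
def IsShortPyramid (G : SimpleGraph V) (H : Set V) (v : V) : Prop :=
  IsHole G H ∧ ∃ a b c : V, a ≠ b ∧ a ≠ c ∧ b ≠ c ∧
    G.neighborSet v ∩ H = {a, b, c} ∧ G.Adj a b ∧ ¬ G.Adj a c ∧ ¬ G.Adj b c

/-- A proper wheel: a wheel that is neither a twin wheel nor a short pyramid. -/
def IsProperWheel (G : SimpleGraph V) (H : Set V) (v : V) : Prop :=
  IsWheel G H v ∧ ¬ IsTwinWheel G H v ∧ ¬ IsShortPyramid G H v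

/-- A universal wheel: v is complete to H. -/
def IsUniversalWheel (G : SimpleGraph V) (H : Set V) (v : V) : Prop :=
  IsWheel G H v ∧ H ⊆ G.neighborSet v


section AuxLemmas
set_option linter.unusedVariables false
set_option linter.unusedSectionVars false

variable {G : SimpleGraph V}

lemma getVert_mem_support {u v : V} (p : G.Walk u v) {i : ℕ} (hi : i ≤ p.length) :
    p.getVert i ∈ p.support :=
  SimpleGraph.Walk.mem_support_iff_exists_getVert.2 ⟨i, rfl, hi⟩

lemma getVert_inj {u v : V} {p : G.Walk u v} (hp : p.IsPath) :
    ∀ {i j : ℕ}, i ≤ p.length → j ≤ p.length → p.getVert i = p.getVert j → i = j := by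
  induction p with
  | nil => intro i j hi hj _; simp only [SimpleGraph.Walk.length_nil, Nat.le_zero] at hi hj; omega
  | @cons a c b h q ih =>
    intro i j hi hj hij
    have hq : q.IsPath := hp.of_cons
    have ha : a ∉ q.support := by
      have := hp.support_nodup
      simp only [SimpleGraph.Walk.support_cons, List.nodup_cons] at this
      exact this.1
    match i, j with
    | 0, 0 => rfl
    | 0, (j+1) =>
      exfalso
      simp only [SimpleGraph.Walk.getVert_zero, SimpleGraph.Walk.getVert_cons_succ] at hij
      exact ha (hij ▸ getVert_mem_support q (by
        simpa [SimpleGraph.Walk.length_cons] using Nat.lt_succ_iff.mp (Nat.lt_of_lt_of_le (Nat.lt_succ_of_le (Nat.le_of_succ_le_succ (by simpa [SimpleGraph.Walk.length_cons] using hj))) (le_refl _))))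
    | (i+1), 0 =>
      exfalso
      simp only [SimpleGraph.Walk.getVert_zero, SimpleGraph.Walk.getVert_cons_succ] at hij
      exact ha (hij ▸ getVert_mem_support q (by simpa [SimpleGraph.Walk.length_cons] using Nat.le_of_succ_le_succ hi))
    | (i+1), (j+1) =>
      simp only [SimpleGraph.Walk.getVert_cons_succ] at hij
      simp only [SimpleGraph.Walk.length_cons] at hi hj
      exact congrArg (· + 1) (ih hq (Nat.le_of_succ_le_succ hi) (Nat.le_of_succ_le_succ hj) hij)

lemma edges_exists_getVert {u v : V} (p : G.Walk u v) {e : Sym2 V} (he : e ∈ p.edges) :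
    ∃ k, k < p.length ∧ e = s(p.getVert k, p.getVert (k+1)) := by
  induction p with
  | nil => simp at he
  | @cons a c b h q ih =>
    simp only [SimpleGraph.Walk.edges_cons, List.mem_cons] at he
    rcases he with he | he
    · exact ⟨0, by simp [SimpleGraph.Walk.length_cons], by
        simpa [SimpleGraph.Walk.getVert_zero, SimpleGraph.Walk.getVert_cons_succ] using he⟩
    · obtain ⟨k, hk, hke⟩ := ih he
      exact ⟨k + 1, by simp [SimpleGraph.Walk.length_cons]; omega, by
        simpa [SimpleGraph.Walk.getVert_cons_succ] using hke⟩

/-- On an induced path, adjacent vertices are consecutive. -/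
lemma induced_consec {x y : V} {p : G.Walk x y} (hp : p.IsPath) (hind : InducedWalk G p)
    {i j : ℕ} (hi : i ≤ p.length) (hj : j ≤ p.length)
    (ha : G.Adj (p.getVert i) (p.getVert j)) : j = i + 1 ∨ i = j + 1 := by
  have he := hind _ _ (getVert_mem_support p hi) (getVert_mem_support p hj) ha
  obtain ⟨k, hk, hke⟩ := edges_exists_getVert p he
  rw [Sym2.eq_iff] at hke
  rcases hke with ⟨h1, h2⟩ | ⟨h1, h2⟩
  · left
    have := getVert_inj hp hi (le_of_lt hk) h1
    have := getVert_inj hp hj hk h2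
    omega
  · right
    have := getVert_inj hp hi hk h1
    have := getVert_inj hp hj (le_of_lt hk) h2
    omega


variable {G : SimpleGraph V}

/-- Connectivity avoiding a set C. -/
def Reach (G : SimpleGraph V) (C : Set V) (p q : V) : Prop :=
  ∃ w : G.Walk p q, ∀ x ∈ w.support, x ∉ C

lemma Reach.refl {C : Set V} {p : V} (hp : p ∉ C) : Reach G C p p :=
  ⟨SimpleGraph.Walk.nil, by simp [hp]⟩

lemma Reach.symm {C : Set V} {p q : V} (h : Reach G C p q) : Reach G C q p := by
  obtain ⟨w, hw⟩ := h
  exact ⟨w.reverse, by intro x hx; apply hw; simpa [SimpleGraph.Walk.support_reverse] using hx⟩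

lemma Reach.trans {C : Set V} {p q r : V} (h1 : Reach G C p q) (h2 : Reach G C q r) :
    Reach G C p r := by
  obtain ⟨w1, hw1⟩ := h1
  obtain ⟨w2, hw2⟩ := h2
  refine ⟨w1.append w2, ?_⟩
  intro x hx
  rcases (SimpleGraph.Walk.mem_support_append_iff w1 w2).1 hx with h | h
  · exact hw1 x h
  · exact hw2 x h

lemma Reach.fst_notMem {C : Set V} {p q : V} (h : Reach G C p q) : p ∉ C := by
  obtain ⟨w, hw⟩ := h; exact hw p w.start_mem_support

lemma Reach.snd_notMem {C : Set V} {p q : V} (h : Reach G C p q) : q ∉ C := by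
  obtain ⟨w, hw⟩ := h; exact hw q w.end_mem_support

lemma reach_single {C : Set V} {q r : V} (hq : q ∉ C) (hr : r ∉ C) (ha : G.Adj q r) :
    Reach G C q r := by
  refine ⟨SimpleGraph.Walk.cons ha SimpleGraph.Walk.nil, ?_⟩
  intro x hx
  have : (SimpleGraph.Walk.cons ha SimpleGraph.Walk.nil).support = [q, r] := by
    simp [SimpleGraph.Walk.support_cons]
  rw [this] at hx
  simp only [List.mem_cons, List.mem_singleton, List.not_mem_nil, or_false] at hx
  rcases hx with rfl | rfl
  · exact hq
  · exact hr

lemma Reach.adj_right {C : Set V} {p q r : V} (h : Reach G C p q) (hr : r ∉ C)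
    (ha : G.Adj q r) : Reach G C p r :=
  h.trans (reach_single h.snd_notMem hr ha)

lemma reach_of_induce_walk {C : Set V} :
    ∀ {p q : ↥(Cᶜ)} (_ : (G.induce Cᶜ).Walk p q), Reach G C (p : V) (q : V) := by
  intro p q w
  induction w with
  | @nil u => exact Reach.refl u.2
  | @cons a c b h w ih =>
    have ha : G.Adj (a : V) (c : V) := by simpa [comap_adj] using h
    exact Reach.trans (reach_single a.2 c.2 ha) ih

lemma induce_reachable_of_reach {C : Set V} :
    ∀ {p q : V} (h : Reach G C p q),
      (G.induce Cᶜ).Reachable ⟨p, h.fst_notMem⟩ ⟨q, h.snd_notMem⟩ := by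
  intro p q h
  obtain ⟨w, hw⟩ := h
  induction w with
  | nil => rfl
  | @cons a c b hadj w ih =>
    have hc : c ∉ C := hw c (by simp [SimpleGraph.Walk.support_cons])
    have hrest : ∀ x ∈ w.support, x ∉ C := fun x hx => hw x (by
      simp only [SimpleGraph.Walk.support_cons, List.mem_cons]; right; exact hx)
    have hane : a ∉ C := hw a ((SimpleGraph.Walk.cons hadj w).start_mem_support)
    have h1 : (G.induce Cᶜ).Adj ⟨a, hane⟩ ⟨c, hc⟩ := hadj
    exact Reachable.trans ⟨SimpleGraph.Walk.cons h1 SimpleGraph.Walk.nil⟩ (ih hrest)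


variable {G : SimpleGraph V} [DecidableEq V]

lemma length_split {x y u : V} (p : G.Walk x y) (h : u ∈ p.support) :
    (p.takeUntil u h).length + (p.dropUntil u h).length = p.length := by
  have := congrArg SimpleGraph.Walk.length (p.take_spec h)
  rw [SimpleGraph.Walk.length_append] at this
  exact this

lemma one_le_length_of_ne {u z : V} (d : G.Walk u z) (h : u ≠ z) : 1 ≤ d.length := by
  cases d with
  | nil => exact absurd rfl h
  | cons h' d' => simp [SimpleGraph.Walk.length_cons]

lemma edge_mem_of_length_one {u z : V} (d : G.Walk u z) (h : d.length = 1) :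
    s(u, z) ∈ d.edges := by
  cases d with
  | nil => simp at h
  | @cons a c b h' d' =>
    cases d' with
    | nil => simp
    | cons h'' d'' => simp [SimpleGraph.Walk.length_cons] at h

/-- From any walk we can extract an induced path with the same endpoints,
    supported on the walk's support. -/
lemma exists_induced_path : ∀ (n : ℕ) {x y : V} (w : G.Walk x y), w.length ≤ n →
    ∃ p : G.Walk x y, p.IsPath ∧ InducedWalk G p ∧
      ∀ z ∈ p.support, z ∈ w.support := by
  intro n
  induction n with
  | zero =>
    intro x y w hw
    cases w with
    | nil =>
      refine ⟨SimpleGraph.Walk.nil, SimpleGraph.Walk.IsPath.nil, ?_, by simp⟩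
      intro u v hu hv hadj
      simp only [SimpleGraph.Walk.support_nil, List.mem_singleton] at hu hv
      subst hu; subst hv; exact absurd hadj (G.irrefl)
    | cons h' w' => simp [SimpleGraph.Walk.length_cons] at hw
  | succ n IH =>
    intro x y w hw
    by_cases hlen0 : w.length = 0
    · exact IH w (by omega)
    set p := w.bypass with hpdef
    have hpath : p.IsPath := w.bypass_isPath
    have hsupp : ∀ z ∈ p.support, z ∈ w.support := fun z hz => w.support_bypass_subset hz
    have hlen : p.length ≤ w.length := w.length_bypass_le
    by_cases hind : InducedWalk G p
    · exact ⟨p, hpath, hind, hsupp⟩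
    · -- find a chord and shortcut
      simp only [InducedWalk, not_forall] at hind
      obtain ⟨u, z, hu, hz, hadj, hne⟩ := hind
      -- locate z, then u relative to z
      by_cases hcase : u ∈ (p.takeUntil z hz).support
      · -- u appears before z
        set q1 := p.takeUntil z hz with hq1
        set t := q1.takeUntil u hcase with ht
        set d := q1.dropUntil u hcase with hd
        have hdlen : 2 ≤ d.length := by
          have h1 : 1 ≤ d.length := one_le_length_of_ne d hadj.ne
          rcases Nat.lt_or_ge d.length 2 with h2 | h2
          · exfalso
            have : d.length = 1 := by omega
            have hmem : s(u, z) ∈ d.edges := edge_mem_of_length_one d this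
            exact hne (p.edges_takeUntil_subset hz (q1.edges_dropUntil_subset hcase hmem))
          · exact h2
        refine ?_
        have hw' : (t.append (SimpleGraph.Walk.cons hadj (p.dropUntil z hz))).length ≤ n := by
          have e1 : q1.length + (p.dropUntil z hz).length = p.length := length_split p hz
          have e2 : t.length + d.length = q1.length := length_split q1 hcase
          rw [SimpleGraph.Walk.length_append, SimpleGraph.Walk.length_cons]
          omega
        obtain ⟨p', hp1, hp2, hp3⟩ := IH _ hw'
        refine ⟨p', hp1, hp2, ?_⟩
        intro zz hzz
        have := hp3 zz hzz
        rcases (SimpleGraph.Walk.mem_support_append_iff _ _).1 this with h | h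
        · exact hsupp _ (p.support_takeUntil_subset hz (q1.support_takeUntil_subset hcase h))
        · rw [SimpleGraph.Walk.support_cons, List.mem_cons] at h
          rcases h with rfl | h
          · exact hsupp _ hu
          · exact hsupp _ (p.support_dropUntil_subset hz h)
      · -- z appears strictly before u
        have hu' : u ∈ (p.dropUntil z hz).support := by
          have h0 : u ∈ ((p.takeUntil z hz).append (p.dropUntil z hz)).support := by
            rw [p.take_spec hz]; exact hu
          rcases (SimpleGraph.Walk.mem_support_append_iff _ _).1 h0 with h | h
          · exact absurd h hcase
          · exact h
        set d2 := p.dropUntil z hz with hd2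
        set t := d2.takeUntil u hu' with ht
        have htlen : 2 ≤ t.length := by
          have h1 : 1 ≤ t.length := one_le_length_of_ne t hadj.ne.symm
          rcases Nat.lt_or_ge t.length 2 with h2 | h2
          · exfalso
            have hl1 : t.length = 1 := by omega
            have hmem : s(z, u) ∈ t.edges := edge_mem_of_length_one t hl1
            have : s(z, u) ∈ p.edges :=
              p.edges_dropUntil_subset hz (d2.edges_takeUntil_subset hu' hmem)
            rw [Sym2.eq_swap] at this
            exact hne this
          · exact h2
        have hw' : ((p.takeUntil z hz).append
            (SimpleGraph.Walk.cons hadj.symm (d2.dropUntil u hu'))).length ≤ n := by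
          have e1 : (p.takeUntil z hz).length + d2.length = p.length := length_split p hz
          have e2 : t.length + (d2.dropUntil u hu').length = d2.length := length_split d2 hu'
          rw [SimpleGraph.Walk.length_append, SimpleGraph.Walk.length_cons]
          omega
        obtain ⟨p', hp1, hp2, hp3⟩ := IH _ hw'
        refine ⟨p', hp1, hp2, ?_⟩
        intro zz hzz
        have := hp3 zz hzz
        rcases (SimpleGraph.Walk.mem_support_append_iff _ _).1 this with h | h
        · exact hsupp _ (p.support_takeUntil_subset hz h)
        · rw [SimpleGraph.Walk.support_cons, List.mem_cons] at h
          rcases h with rfl | h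
          · exact hsupp _ (p.support_dropUntil_subset hz (SimpleGraph.Walk.start_mem_support d2))
          · exact hsupp _ (p.support_dropUntil_subset hz (d2.support_dropUntil_subset hu' h))


lemma mod_sub_eq_one {n a b : ℕ} (hn : 2 ≤ n) (ha : a < n) (hb : b < n) :
    (n - b + a) % n = 1 ↔ (a = b + 1 ∨ (b = n - 1 ∧ a = 0)) := by
  rcases le_or_gt b a with h | h
  · have e : n - b + a = n + (a - b) := by omega
    rw [e, Nat.add_mod_left, Nat.mod_eq_of_lt (by omega)]
    omega
  · have e : n - b + a = n - (b - a) := by omega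
    rw [e, Nat.mod_eq_of_lt (by omega)]
    omega

lemma fin_sub_val_one {n : ℕ} (hn : 2 ≤ n) (i j : Fin n) :
    ((i - j).val = 1) ↔ ((i : ℕ) = j + 1 ∨ ((j : ℕ) = n - 1 ∧ (i : ℕ) = 0)) := by
  rw [Fin.sub_def]
  exact mod_sub_eq_one hn i.isLt j.isLt

lemma hole_of_two_paths {x y : V} {Da Db : Set V}
    (P1 P2 : G.Walk x y)
    (h1p : P1.IsPath) (h2p : P2.IsPath)
    (h1i : InducedWalk G P1) (h2i : InducedWalk G P2)
    (h1l : 2 ≤ P1.length) (h2l : 2 ≤ P2.length)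
    (hxy : ¬ G.Adj x y)
    (hxa : x ∉ Da) (hxb : x ∉ Db) (hya : y ∉ Da) (hyb : y ∉ Db)
    (hdisj : ∀ z, z ∈ Da → z ∈ Db → False)
    (hanti : ∀ u w, u ∈ Da → w ∈ Db → ¬ G.Adj u w)
    (h1s : ∀ z ∈ P1.support, z = x ∨ z = y ∨ z ∈ Da)
    (h2s : ∀ z ∈ P2.support, z = x ∨ z = y ∨ z ∈ Db) :
    ∃ n, 4 ≤ n ∧
      Nonempty ((G.induce {z | z ∈ P1.support ∨ z ∈ P2.support}) ≃g cycleGraph n) := by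
  set l1 := P1.length with hl1
  set l2 := P2.length with hl2
  set n := l1 + l2 with hn
  have hn4 : 4 ≤ n := by omega
  have hn2 : 2 ≤ n := by omega
  set H : Set V := {z | z ∈ P1.support ∨ z ∈ P2.support} with hH
  set φ : Fin n → V := fun i => if (i : ℕ) < l1 then P1.getVert i else P2.getVert (n - i)
    with hφ
  -- getVert basics
  have g1x : ∀ m, m ≤ l1 → P1.getVert m = x → m = 0 := by
    intro m hm h
    exact getVert_inj h1p hm (Nat.zero_le _) (h.trans (P1.getVert_zero).symm)
  have g1y : ∀ m, m ≤ l1 → P1.getVert m = y → m = l1 := by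
    intro m hm h
    exact getVert_inj h1p hm (le_refl _) (h.trans (P1.getVert_length).symm)
  have g2x : ∀ m, m ≤ l2 → P2.getVert m = x → m = 0 := by
    intro m hm h
    exact getVert_inj h2p hm (Nat.zero_le _) (h.trans (P2.getVert_zero).symm)
  have g2y : ∀ m, m ≤ l2 → P2.getVert m = y → m = l2 := by
    intro m hm h
    exact getVert_inj h2p hm (le_refl _) (h.trans (P2.getVert_length).symm)
  have hint1 : ∀ m, 1 ≤ m → m < l1 → P1.getVert m ∈ Da := by
    intro m h1 h2
    rcases h1s _ (getVert_mem_support P1 (le_of_lt h2)) with h | h | h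
    · exact absurd (g1x m (le_of_lt h2) h) (by omega)
    · exact absurd (g1y m (le_of_lt h2) h) (by omega)
    · exact h
  have hint2 : ∀ m, 1 ≤ m → m < l2 → P2.getVert m ∈ Db := by
    intro m h1 h2
    rcases h2s _ (getVert_mem_support P2 (le_of_lt h2)) with h | h | h
    · exact absurd (g2x m (le_of_lt h2) h) (by omega)
    · exact absurd (g2y m (le_of_lt h2) h) (by omega)
    · exact h
  have hmem : ∀ i : Fin n, φ i ∈ H := by
    intro i
    rw [hφ]
    by_cases hi : (i : ℕ) < l1
    · simp only [hi, if_pos]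
      exact Or.inl (getVert_mem_support P1 (le_of_lt hi))
    · simp only [hi, if_neg, not_false_iff]
      exact Or.inr (getVert_mem_support P2 (by omega))
  -- injectivity
  have hinj : ∀ i j : Fin n, φ i = φ j → i = j := by
    have mixed : ∀ i j : Fin n, (i : ℕ) < l1 → ¬ ((j : ℕ) < l1) → φ i = φ j → False := by
      intro i j hi hj h
      rw [hφ] at h
      simp only [hi, if_pos, hj, if_neg, not_false_iff] at h
      have hj1 : 1 ≤ n - (j : ℕ) := by have := j.isLt; omega
      have hj2 : n - (j : ℕ) ≤ l2 := by omega
      rcases Nat.lt_or_ge (n - (j : ℕ)) l2 with hml | hml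
      · -- φ j ∈ Db
        have hDb : P2.getVert (n - (j : ℕ)) ∈ Db := hint2 _ hj1 hml
        rcases h1s _ (getVert_mem_support P1 (le_of_lt hi)) with h' | h' | h'
        · rw [h'] at h
          have := g2x _ (le_of_lt hml) h.symm
          omega
        · rw [h'] at h
          exact hyb (h ▸ hDb)
        · exact hdisj _ h' (h ▸ hDb)
      · -- n - j = l2, φ j = y
        have : n - (j : ℕ) = l2 := by omega
        rw [this, P2.getVert_length] at h
        have := g1y _ (le_of_lt hi) h
        omega
    intro i j h
    by_cases hi : (i : ℕ) < l1 <;> by_cases hj : (j : ℕ) < l1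
    · rw [hφ] at h
      simp only [hi, hj, if_pos] at h
      exact Fin.ext (getVert_inj h1p (le_of_lt hi) (le_of_lt hj) h)
    · exact absurd (mixed i j hi hj h) (by simp)
    · exact absurd (mixed j i hj hi h.symm) (by simp)
    · rw [hφ] at h
      simp only [hi, hj, if_neg, not_false_iff] at h
      have e := getVert_inj h2p (show n - (i:ℕ) ≤ l2 by omega)
        (show n - (j:ℕ) ≤ l2 by omega) h
      have := i.isLt; have := j.isLt
      exact Fin.ext (by omega)
  -- surjectivity
  have hsurj : ∀ u ∈ H, ∃ i : Fin n, φ i = u := by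
    intro u hu
    rcases hu with hu | hu
    · obtain ⟨m, hm, hmle⟩ := SimpleGraph.Walk.mem_support_iff_exists_getVert.1 hu
      rcases Nat.lt_or_ge m l1 with h | h
      · exact ⟨⟨m, by omega⟩, by rw [hφ]; simp only [h, if_pos]; exact hm⟩
      · -- m = l1, u = y
        have hml : m = l1 := by omega
        refine ⟨⟨l1, by omega⟩, ?_⟩
        rw [hφ]
        simp only [lt_irrefl, if_neg, not_false_iff]
        have : n - l1 = l2 := by omega
        rw [this, P2.getVert_length, ← hm, hml, P1.getVert_length]
    · obtain ⟨m, hm, hmle⟩ := SimpleGraph.Walk.mem_support_iff_exists_getVert.1 hu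
      rcases Nat.eq_zero_or_pos m with h | h
      · refine ⟨⟨0, by omega⟩, ?_⟩
        rw [hφ]
        simp only [show (0:ℕ) < l1 by omega, if_pos]
        rw [P1.getVert_zero, ← hm, h, P2.getVert_zero]
      · refine ⟨⟨n - m, by omega⟩, ?_⟩
        rw [hφ]
        simp only [show ¬ (n - m < l1) by omega, if_neg, not_false_iff]
        rw [show n - (n - m) = m by omega]
        exact hm
  -- forward adjacency
  have hfwd : ∀ i j : Fin n, G.Adj (φ i) (φ j) →
      ((j : ℕ) = i + 1 ∨ (i : ℕ) = j + 1 ∨ ((i : ℕ) = 0 ∧ (j : ℕ) = n - 1) ∨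
        ((j : ℕ) = 0 ∧ (i : ℕ) = n - 1)) := by
    have mixed : ∀ i j : Fin n, (i : ℕ) < l1 → ¬ ((j : ℕ) < l1) → G.Adj (φ i) (φ j) →
        ((j : ℕ) = i + 1 ∨ ((i : ℕ) = 0 ∧ (j : ℕ) = n - 1)) := by
      intro i j hi hj h
      rw [hφ] at h
      simp only [hi, if_pos, hj, if_neg, not_false_iff] at h
      have hj1 : 1 ≤ n - (j : ℕ) := by have := j.isLt; omega
      have hj2 : n - (j : ℕ) ≤ l2 := by omega
      rcases Nat.lt_or_ge (n - (j : ℕ)) l2 with hml | hml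
      · have hDb : P2.getVert (n - (j : ℕ)) ∈ Db := hint2 _ hj1 hml
        rcases h1s _ (getVert_mem_support P1 (le_of_lt hi)) with h' | h' | h'
        · -- φ i = x : adjacency within P2 from index 0
          have hx0 : P1.getVert i = P2.getVert 0 := by rw [h', P2.getVert_zero]
          rw [hx0] at h
          rcases induced_consec h2p h2i (Nat.zero_le _) hj2 h with hc | hc
          · -- n - j = 1, so j = n - 1 and i = 0
            have hi0 : (i : ℕ) = 0 := g1x _ (le_of_lt hi) h'
            right
            constructor
            · exact hi0
            · have := j.isLt; omega
          · omega
        · -- φ i = y : impossible since i < l1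
          have := g1y _ (le_of_lt hi) h'
          omega
        · exact absurd h (hanti _ _ h' hDb)
      · -- φ j = y = P1.getVert l1
        have he : n - (j : ℕ) = l2 := by omega
        have hy0 : P2.getVert (n - (j : ℕ)) = P1.getVert l1 := by
          rw [he, P2.getVert_length, P1.getVert_length]
        rw [hy0] at h
        rcases induced_consec h1p h1i (le_of_lt hi) (le_refl _) h with hc | hc
        · omega
        · -- i = l1 + 1 contradicts i < l1
          left
          have hjval : (j : ℕ) = l1 := by have := j.isLt; omega
          omega
    intro i j h
    by_cases hi : (i : ℕ) < l1 <;> by_cases hj : (j : ℕ) < l1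
    · rw [hφ] at h
      simp only [hi, hj, if_pos] at h
      rcases induced_consec h1p h1i (le_of_lt hi) (le_of_lt hj) h with hc | hc
      · left; exact hc
      · right; left; exact hc
    · rcases mixed i j hi hj h with hc | hc
      · left; exact hc
      · right; right; left; exact hc
    · rcases mixed j i hj hi h.symm with hc | hc
      · right; left; exact hc
      · right; right; right; exact hc
    · rw [hφ] at h
      simp only [hi, hj, if_neg, not_false_iff] at h
      have b1 : n - (i:ℕ) ≤ l2 := by omega
      have b2 : n - (j:ℕ) ≤ l2 := by omega
      have := i.isLt; have := j.isLt
      rcases induced_consec h2p h2i b1 b2 h with hc | hc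
      · right; left; omega
      · left; omega
  -- backward adjacency
  have hbwd : ∀ i j : Fin n,
      ((j : ℕ) = i + 1 ∨ (i : ℕ) = j + 1 ∨ ((i : ℕ) = 0 ∧ (j : ℕ) = n - 1) ∨
        ((j : ℕ) = 0 ∧ (i : ℕ) = n - 1)) → G.Adj (φ i) (φ j) := by
    have step : ∀ i j : Fin n, (j : ℕ) = i + 1 → G.Adj (φ i) (φ j) := by
      intro i j hij
      have hjlt := j.isLt
      rw [hφ]
      rcases Nat.lt_or_ge ((j : ℕ)) l1 with h | h
      · -- both in P1 branch
        simp only [show (i:ℕ) < l1 by omega, h, if_pos]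
        have := P1.adj_getVert_succ (i := (i : ℕ)) (by omega)
        rw [hij]
        exact this
      · rcases Nat.lt_or_ge ((i : ℕ)) l1 with h' | h'
        · -- i = l1 - 1, j = l1 : boundary
          have hjl : (j : ℕ) = l1 := by omega
          simp only [h', if_pos, show ¬ ((j:ℕ) < l1) by omega, if_neg, not_false_iff]
          have hy : P2.getVert (n - (j : ℕ)) = P1.getVert l1 := by
            rw [show n - (j:ℕ) = l2 by omega, P2.getVert_length, P1.getVert_length]
          rw [hy]
          have := P1.adj_getVert_succ (i := (i : ℕ)) (by omega)
          rw [show (i:ℕ) + 1 = l1 by omega] at this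
          exact this
        · -- both in P2 branch
          simp only [show ¬ ((i:ℕ) < l1) by omega, show ¬ ((j:ℕ) < l1) by omega,
            if_neg, not_false_iff]
          have hb : n - (j : ℕ) < l2 := by omega
          have := P2.adj_getVert_succ (i := n - (j : ℕ)) (by omega)
          rw [show n - (j:ℕ) + 1 = n - (i:ℕ) by omega] at this
          exact this.symm
    have wrap : ∀ i j : Fin n, (i : ℕ) = 0 → (j : ℕ) = n - 1 → G.Adj (φ i) (φ j) := by
      intro i j hi hj
      have e1 : φ i = x := by
        rw [hφ]
        simp only [hi]
        rw [if_pos (by omega : (0:ℕ) < l1)]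
        exact P1.getVert_zero
      have e2 : φ j = P2.getVert 1 := by
        rw [hφ]
        simp only [hj]
        rw [if_neg (by omega : ¬ (n - 1 < l1))]
        congr 1
        omega
      rw [e1, e2]
      have := P2.adj_getVert_succ (i := 0) (by omega)
      rw [P2.getVert_zero] at this
      exact this
    intro i j h
    rcases h with h | h | ⟨h1, h2⟩ | ⟨h1, h2⟩
    · exact step i j h
    · exact (step j i h).symm
    · exact wrap i j h1 h2
    · exact (wrap j i h1 h2).symm
  -- assemble the isomorphism
  have hn2' : 2 ≤ n := hn2
  refine ⟨n, hn4, ⟨?_⟩⟩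
  have hbij : Function.Bijective (fun i : Fin n => (⟨φ i, hmem i⟩ : ↥H)) := by
    constructor
    · intro i j h
      exact hinj i j (congrArg Subtype.val h)
    · rintro ⟨u, hu⟩
      obtain ⟨i, hi⟩ := hsurj u hu
      exact ⟨i, Subtype.ext hi⟩
  refine SimpleGraph.Iso.symm ⟨Equiv.ofBijective _ hbij, ?_⟩
  intro i j
  simp only [Equiv.ofBijective_apply, comap_adj, Function.Embedding.coe_subtype]
  rw [cycleGraph_adj']
  constructor
  · intro h
    have := hfwd i j (by exact h)
    rcases this with h' | h' | ⟨h1, h2⟩ | ⟨h1, h2⟩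
    · right; rw [fin_sub_val_one hn2]; left; exact h'
    · left; rw [fin_sub_val_one hn2]; left; exact h'
    · left; rw [fin_sub_val_one hn2]; right; exact ⟨h2, h1⟩
    · right; rw [fin_sub_val_one hn2]; right; exact ⟨h2, h1⟩
  · intro h
    apply hbwd i j
    rcases h with h | h
    · rw [fin_sub_val_one hn2] at h
      rcases h with h | ⟨h1, h2⟩
      · right; left; exact h
      · right; right; left; exact ⟨h2, h1⟩
    · rw [fin_sub_val_one hn2] at h
      rcases h with h | ⟨h1, h2⟩
      · left; exact h
      · right; right; right; exact ⟨h2, h1⟩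


lemma walk_stays {C D : Set V}
    (hclos : ∀ u w, u ∈ D → w ∉ C → G.Adj u w → w ∈ D) :
    ∀ {p q : V} (w : G.Walk p q), p ∈ D → (∀ x ∈ w.support, x ∉ C) →
      ∀ z ∈ w.support, z ∈ D := by
  intro p q w
  induction w with
  | nil =>
    intro hp _ z hz
    simp only [SimpleGraph.Walk.support_nil, List.mem_singleton] at hz
    subst hz; exact hp
  | @cons p q t hadj w ih =>
    intro hp hav z hz
    have hqD : q ∈ D := hclos _ _ hp (hav q (by
      simp only [SimpleGraph.Walk.support_cons, List.mem_cons]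
      exact Or.inr w.start_mem_support)) hadj
    rw [SimpleGraph.Walk.support_cons, List.mem_cons] at hz
    rcases hz with rfl | hz
    · exact hp
    · exact ih hqD (fun x hx => hav x (by
        simp only [SimpleGraph.Walk.support_cons, List.mem_cons]; exact Or.inr hx)) z hz

lemma crossing {C D : Set V} {c : V}
    (hclos : ∀ u w, u ∈ D → w ∉ C → G.Adj u w → w ∈ D) :
    ∀ {p t : V} (w : G.Walk p t), p ∈ D → t ∉ D → (∀ x ∈ w.support, x ∈ C → x = c) →
      ∃ d ∈ D, G.Adj c d := by
  intro p t w
  induction w with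
  | nil => intro hp ht _; exact absurd hp ht
  | @cons p q r hadj w ih =>
    intro hp ht hav
    by_cases hq : q = c
    · exact ⟨p, hp, (hq ▸ hadj).symm⟩
    · have hqC : q ∉ C := fun h => hq (hav q (by
        simp only [SimpleGraph.Walk.support_cons, List.mem_cons]
        exact Or.inr w.start_mem_support) h)
      exact ih (hclos _ _ hp hqC hadj) ht (fun x hx hxC => hav x (by
        simp only [SimpleGraph.Walk.support_cons, List.mem_cons]; exact Or.inr hx) hxC)

lemma exists_min_cutset [Fintype V] {v : V} {C : Set V}
    (hvC : v ∈ C) (hCN : C ⊆ closedNbr G v) (hdisc : ¬ (G.induce Cᶜ).Preconnected) :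
    ∃ C₀ : Set V, v ∈ C₀ ∧ C₀ ⊆ closedNbr G v ∧ ¬ (G.induce C₀ᶜ).Preconnected ∧
      ∀ c ∈ C₀, c ≠ v → (G.induce (C₀ \ {c})ᶜ).Preconnected := by
  classical
  suffices h : ∀ (n : ℕ) (C : Set V), C.ncard ≤ n → v ∈ C → C ⊆ closedNbr G v →
      ¬ (G.induce Cᶜ).Preconnected →
      ∃ C₀ : Set V, v ∈ C₀ ∧ C₀ ⊆ closedNbr G v ∧ ¬ (G.induce C₀ᶜ).Preconnected ∧
        ∀ c ∈ C₀, c ≠ v → (G.induce (C₀ \ {c})ᶜ).Preconnected by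
    exact h C.ncard C le_rfl hvC hCN hdisc
  intro n
  induction n with
  | zero =>
    intro C hc h1 h2 h3
    exfalso
    have hC : C = ∅ := (Set.ncard_eq_zero (Set.toFinite C)).mp (Nat.le_zero.mp hc)
    rw [hC] at h1
    exact h1
  | succ n IH =>
    intro C hc h1 h2 h3
    by_cases hex : ∃ c ∈ C, c ≠ v ∧ ¬ (G.induce (C \ {c})ᶜ).Preconnected
    · obtain ⟨c, hcC, hcv, hnp⟩ := hex
      have hlt : (C \ {c}).ncard ≤ n := by
        have := Set.ncard_lt_ncard (Set.sdiff_singleton_ssubset.2 hcC) (Set.toFinite C)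
        omega
      exact IH (C \ {c}) hlt ⟨h1, fun h => hcv ((Set.mem_singleton_iff.1 h).symm)⟩
        (fun z hz => h2 hz.1) hnp
    · push_neg at hex
      exact ⟨C, h1, h2, h3, hex⟩

lemma no_common_nbr_adj (htri : G.CliqueFree 3) {v p q : V}
    (h1 : G.Adj v p) (h2 : G.Adj v q) : ¬ G.Adj p q := by
  classical
  intro h3
  exact htri {v, p, q} (SimpleGraph.is3Clique_triple_iff.2 ⟨h1, h2, h3⟩)

end AuxLemmas

/-- A connected (theta, triangle, wheel)-free graph with no clique cutset has
no star cutset. -/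
theorem stmt5 {V : Type} [Fintype V] (G : SimpleGraph V) (hconn : G.Connected)
    (ht : ¬ ContainsTheta G) (htri : G.CliqueFree 3)
    (hw : ∀ (H : Set V) (v : V), ¬ IsWheel G H v)
    (hcc : ¬ HasCliqueCutset G) :
    ¬ ∃ (v : V) (C : Set V), v ∈ C ∧ C ⊆ closedNbr G v ∧
      ¬ (G.induce Cᶜ).Preconnected := by
  classical
  rintro ⟨v, C, hvC, hCN, hdisc⟩
  obtain ⟨C₀, hv0, hN0, hnp0, hmin⟩ := exists_min_cutset hvC hCN hdisc
  have hcut0 : ¬ (G.induce C₀ᶜ).Preconnected := hnp0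
  simp only [SimpleGraph.Preconnected, not_forall] at hnp0
  obtain ⟨⟨a, haC⟩, ⟨b, hbC⟩, hab⟩ := hnp0
  have haC' : a ∉ C₀ := haC
  have hbC' : b ∉ C₀ := hbC
  have hreach_ab : ¬ Reach G C₀ a b := fun h => hab (induce_reachable_of_reach h)
  set Da : Set V := {z | Reach G C₀ a z} with hDaDef
  set Db : Set V := {z | Reach G C₀ b z} with hDbDef
  have haDa : a ∈ Da := Reach.refl haC'
  have hbDb : b ∈ Db := Reach.refl hbC'
  have hclosA : ∀ u w, u ∈ Da → w ∉ C₀ → G.Adj u w → w ∈ Da :=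
    fun u w hu hw ha => Reach.adj_right hu hw ha
  have hclosB : ∀ u w, u ∈ Db → w ∉ C₀ → G.Adj u w → w ∈ Db :=
    fun u w hu hw ha => Reach.adj_right hu hw ha
  have hAnti : ∀ u w, u ∈ Da → w ∈ Db → ¬ G.Adj u w := by
    intro u w hu hw hadj
    exact hreach_ab (Reach.trans (Reach.adj_right hu (Reach.snd_notMem hw) hadj)
      (Reach.symm hw))
  have hdisjD : ∀ z, z ∈ Da → z ∈ Db → False :=
    fun z h1 h2 => hreach_ab (Reach.trans h1 (Reach.symm h2))
  have hbDa : b ∉ Da := fun h => hreach_ab h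
  have haDb : a ∉ Db := fun h => hreach_ab (Reach.symm h)
  -- every vertex of C₀ other than v has neighbors in both Da and Db
  have hnbr : ∀ c ∈ C₀, c ≠ v → (∃ d ∈ Da, G.Adj c d) ∧ (∃ d ∈ Db, G.Adj c d) := by
    intro c hc hcv
    have hpre := hmin c hc hcv
    have haC2 : a ∈ (C₀ \ {c})ᶜ := fun h => haC' h.1
    have hbC2 : b ∈ (C₀ \ {c})ᶜ := fun h => hbC' h.1
    obtain ⟨w⟩ := hpre ⟨a, haC2⟩ ⟨b, hbC2⟩
    obtain ⟨w', hw'⟩ := reach_of_induce_walk w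
    have hav : ∀ x ∈ w'.support, x ∈ C₀ → x = c := by
      intro x hx hxC
      by_contra hne
      exact hw' x hx ⟨hxC, hne⟩
    constructor
    · exact crossing hclosA w' haDa hbDa hav
    · refine crossing hclosB w'.reverse hbDb haDb ?_
      intro x hx hxC
      exact hav x (by rwa [SimpleGraph.Walk.support_reverse, List.mem_reverse] at hx) hxC
  -- C₀ is not a clique, giving two nonadjacent vertices x, y
  have hnc : ¬ G.IsClique C₀ := fun h => hcc ⟨C₀, h, hcut0⟩
  rw [SimpleGraph.isClique_iff] at hnc
  unfold Set.Pairwise at hnc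
  push_neg at hnc
  obtain ⟨x, hx0, y, hy0, hxyne, hxy⟩ := hnc
  have hxnv : x ≠ v := by
    rintro rfl
    rcases Set.mem_insert_iff.1 (hN0 hy0) with hy | hy
    · exact hxyne hy.symm
    · exact hxy hy
  have hynv : y ≠ v := by
    rintro rfl
    rcases Set.mem_insert_iff.1 (hN0 hx0) with hx | hx
    · exact hxyne hx
    · exact hxy hx.symm
  have hvx : G.Adj v x := by
    rcases Set.mem_insert_iff.1 (hN0 hx0) with hx | hx
    · exact absurd hx hxnv
    · exact hx
  have hvy : G.Adj v y := by
    rcases Set.mem_insert_iff.1 (hN0 hy0) with hy | hy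
    · exact absurd hy hynv
    · exact hy
  -- neighbors of x and y in Da and Db
  obtain ⟨⟨xa, hxaD, hxaAdj⟩, ⟨xb, hxbD, hxbAdj⟩⟩ := hnbr x hx0 hxnv
  obtain ⟨⟨ya, hyaD, hyaAdj⟩, ⟨yb, hybD, hybAdj⟩⟩ := hnbr y hy0 hynv
  -- induced path P1 from x to y through Da
  obtain ⟨Wa, hWa⟩ := Reach.trans (Reach.symm hxaD) hyaD
  have hWa_supp : ∀ z ∈ Wa.support, z ∈ Da := walk_stays hclosA Wa hxaD hWa
  set w1 : G.Walk x y := SimpleGraph.Walk.cons hxaAdj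
    (Wa.append (SimpleGraph.Walk.cons hyaAdj.symm SimpleGraph.Walk.nil)) with hw1def
  have hw1supp : ∀ z ∈ w1.support, z = x ∨ z = y ∨ z ∈ Da := by
    intro z hz
    rw [hw1def, SimpleGraph.Walk.support_cons, List.mem_cons] at hz
    rcases hz with rfl | hz
    · exact Or.inl rfl
    · rcases (SimpleGraph.Walk.mem_support_append_iff _ _).1 hz with h | h
      · exact Or.inr (Or.inr (hWa_supp z h))
      · rw [SimpleGraph.Walk.support_cons, List.mem_cons] at h
        rcases h with rfl | h
        · exact Or.inr (Or.inr (hWa_supp _ Wa.end_mem_support))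
        · simp only [SimpleGraph.Walk.support_nil, List.mem_singleton] at h
          exact Or.inr (Or.inl h)
  obtain ⟨P1, hP1p, hP1i, hP1s⟩ := exists_induced_path w1.length w1 le_rfl
  have hP1sup : ∀ z ∈ P1.support, z = x ∨ z = y ∨ z ∈ Da :=
    fun z hz => hw1supp z (hP1s z hz)
  -- induced path P2 from x to y through Db
  obtain ⟨Wb, hWb⟩ := Reach.trans (Reach.symm hxbD) hybD
  have hWb_supp : ∀ z ∈ Wb.support, z ∈ Db := walk_stays hclosB Wb hxbD hWb
  set w2 : G.Walk x y := SimpleGraph.Walk.cons hxbAdj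
    (Wb.append (SimpleGraph.Walk.cons hybAdj.symm SimpleGraph.Walk.nil)) with hw2def
  have hw2supp : ∀ z ∈ w2.support, z = x ∨ z = y ∨ z ∈ Db := by
    intro z hz
    rw [hw2def, SimpleGraph.Walk.support_cons, List.mem_cons] at hz
    rcases hz with rfl | hz
    · exact Or.inl rfl
    · rcases (SimpleGraph.Walk.mem_support_append_iff _ _).1 hz with h | h
      · exact Or.inr (Or.inr (hWb_supp z h))
      · rw [SimpleGraph.Walk.support_cons, List.mem_cons] at h
        rcases h with rfl | h
        · exact Or.inr (Or.inr (hWb_supp _ Wb.end_mem_support))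
        · simp only [SimpleGraph.Walk.support_nil, List.mem_singleton] at h
          exact Or.inr (Or.inl h)
  obtain ⟨P2, hP2p, hP2i, hP2s⟩ := exists_induced_path w2.length w2 le_rfl
  have hP2sup : ∀ z ∈ P2.support, z = x ∨ z = y ∨ z ∈ Db :=
    fun z hz => hw2supp z (hP2s z hz)
  -- basic non-memberships
  have hxDa : x ∉ Da := fun h => Reach.snd_notMem h hx0
  have hxDb : x ∉ Db := fun h => Reach.snd_notMem h hx0
  have hyDa : y ∉ Da := fun h => Reach.snd_notMem h hy0
  have hyDb : y ∉ Db := fun h => Reach.snd_notMem h hy0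
  have hvDa : v ∉ Da := fun h => Reach.snd_notMem h hv0
  have hvDb : v ∉ Db := fun h => Reach.snd_notMem h hv0
  -- lengths
  have hP1len : 2 ≤ P1.length := by
    rcases Nat.lt_or_ge P1.length 2 with h | h
    · exfalso
      rcases Nat.lt_or_ge P1.length 1 with h0 | h0
      · have h1 : P1.length = 0 := by omega
        exact hxyne (SimpleGraph.Walk.eq_of_length_eq_zero h1)
      · have h1 : P1.length = 1 := by omega
        exact hxy (P1.adj_of_mem_edges (edge_mem_of_length_one P1 h1))
    · exact h
  have hP2len : 2 ≤ P2.length := by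
    rcases Nat.lt_or_ge P2.length 2 with h | h
    · exfalso
      rcases Nat.lt_or_ge P2.length 1 with h0 | h0
      · have h1 : P2.length = 0 := by omega
        exact hxyne (SimpleGraph.Walk.eq_of_length_eq_zero h1)
      · have h1 : P2.length = 1 := by omega
        exact hxy (P2.adj_of_mem_edges (edge_mem_of_length_one P2 h1))
    · exact h
  -- interiors
  have hint1 : ∀ z, z ∈ wInterior G P1 → z ∈ Da := by
    rintro z ⟨hzs, hzx, hzy⟩
    rcases hP1sup z hzs with h | h | h
    · exact absurd h hzx
    · exact absurd h hzy
    · exact h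
  have hint2 : ∀ z, z ∈ wInterior G P2 → z ∈ Db := by
    rintro z ⟨hzs, hzx, hzy⟩
    rcases hP2sup z hzs with h | h | h
    · exact absurd h hzx
    · exact absurd h hzy
    · exact h
  by_cases hzc : ∃ z, (z ∈ wInterior G P1 ∨ z ∈ wInterior G P2) ∧ G.Adj v z
  · -- wheel case
    obtain ⟨z, hzmem, hvz⟩ := hzc
    obtain ⟨n, hn4, hiso⟩ := hole_of_two_paths P1 P2 hP1p hP2p hP1i hP2i hP1len hP2len
      hxy hxDa hxDb hyDa hyDb hdisjD hAnti hP1sup hP2sup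
    have hzH : z ∈ ({w | w ∈ P1.support ∨ w ∈ P2.support} : Set V) := by
      rcases hzmem with h | h
      · exact Or.inl h.1
      · exact Or.inr h.1
    have hzx : z ≠ x := by rcases hzmem with h | h <;> exact h.2.1
    have hzy : z ≠ y := by rcases hzmem with h | h <;> exact h.2.2
    refine hw {w | w ∈ P1.support ∨ w ∈ P2.support} v ⟨⟨n, hn4, hiso⟩, x, y, z,
      ⟨Or.inl P1.start_mem_support, hvx⟩, ⟨Or.inl P1.end_mem_support, hvy⟩,
      ⟨hzH, hvz⟩, hxyne, hzx.symm, hzy.symm, hxy,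
      no_common_nbr_adj htri hvx hvz, no_common_nbr_adj htri hvy hvz⟩
  · -- theta case
    push_neg at hzc
    apply ht
    set mid : G.Walk x y := SimpleGraph.Walk.cons hvx.symm
      (SimpleGraph.Walk.cons hvy SimpleGraph.Walk.nil) with hmiddef
    have hmids : ∀ u, u ∈ mid.support ↔ (u = x ∨ u = v ∨ u = y) := by
      intro u
      rw [hmiddef]
      simp [SimpleGraph.Walk.support_cons]
    have hmidp : mid.IsPath := by
      rw [SimpleGraph.Walk.isPath_def, hmiddef]
      simp only [SimpleGraph.Walk.support_cons, SimpleGraph.Walk.support_nil]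
      refine List.nodup_cons.2 ⟨?_, List.nodup_cons.2 ⟨?_, List.nodup_singleton y⟩⟩
      · simp only [List.mem_cons, List.mem_singleton, List.not_mem_nil, or_false]
        rintro (h | h)
        · exact hvx.ne' h
        · exact hxyne h
      · simp only [List.mem_singleton, List.not_mem_nil, or_false]
        exact fun h => hvy.ne h
    have hmidi : InducedWalk G mid := by
      intro u w hu hw' hadj
      rw [hmids] at hu hw'
      have hedges : mid.edges = [s(x, v), s(v, y)] := by
        rw [hmiddef]; simp
      rw [hedges]
      rcases hu with rfl | rfl | rfl <;> rcases hw' with rfl | rfl | rfl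
      · exact absurd hadj G.irrefl
      · simp
      · exact absurd hadj hxy
      · simp [Sym2.eq_swap]
      · exact absurd hadj G.irrefl
      · simp
      · exact absurd hadj (fun h => hxy h.symm)
      · simp [Sym2.eq_swap]
      · exact absurd hadj G.irrefl
    have hmidlen : mid.length = 2 := by rw [hmiddef]; simp
    have hmidint : ∀ z, z ∈ wInterior G mid → z = v := by
      rintro z ⟨hzs, hzx, hzy⟩
      rcases (hmids z).1 hzs with h | h | h
      · exact absurd h hzx
      · exact h
      · exact absurd h hzy
    refine ⟨x, y, P1, P2, mid, hxy, hP1p, hP2p, hmidp, hP1i, hP2i, hmidi,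
      hP1len, hP2len, by omega, ?_, ?_, ?_, ?_, ?_, ?_⟩
    · exact Set.disjoint_left.2 (fun {z} hz1 hz2 => hdisjD z (hint1 z hz1) (hint2 z hz2))
    · refine Set.disjoint_left.2 (fun {z} hz1 hz3 => ?_)
      have h1 := hint1 z hz1
      rw [hmidint z hz3] at h1
      exact hvDa h1
    · refine Set.disjoint_left.2 (fun {z} hz2 hz3 => ?_)
      have h1 := hint2 z hz2
      rw [hmidint z hz3] at h1
      exact hvDb h1
    · exact fun u hu w hw' => hAnti u w (hint1 u hu) (hint2 w hw')
    · intro u hu w hw' hadj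
      rw [hmidint w hw'] at hadj
      exact hzc u (Or.inl hu) hadj.symm
    · intro u hu w hw' hadj
      rw [hmidint w hw'] at hadj
      exact hzc u (Or.inr hu) hadj.symm


end Paper
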